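/- If X and X′ are [0,1]-valued random variables with Kolmogorov distance at most ε and with continuous CDFs, and σ, σ′ ∈ [0,1] satisfy E[(X − σ)₊] = c = E[(X′ − σ′)₊] for the same cost c > 0, then |E[(X − σ′)₊] − c| ≤ ε; i.e., the reserve price of the perturbed distribution is approximately a reserve price for the true distribution in objective value. -/

import Mathlib

open MeasureTheory

lemma layercake_aux {Ω : Type*} [MeasurableSpace Ω] (μ : Measure Ω) [IsProbabilityMeasure μ]
    (Y : Ω → ℝ) (hY : Measurable Y) (hYr : ∀ᵐ ω ∂μ, Y ω ∈ Set.Icc (0 : ℝ) 1)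
    (σ' : ℝ) (hσ'0 : 0 ≤ σ') :
    ∫ ω, max (Y ω - σ') 0 ∂μ
      = ∫ t in Set.Ioc (0 : ℝ) 1, (1 - (μ {ω | Y ω ≤ σ' + t}).toReal) := by
  have hf_meas : Measurable fun ω => max (Y ω - σ') 0 :=
    (hY.sub measurable_const).max measurable_const
  have hf_nn : 0 ≤ᵐ[μ] fun ω => max (Y ω - σ') 0 :=
    Filter.Eventually.of_forall fun ω => le_max_right _ _
  have hf_le : ∀ᵐ ω ∂μ, max (Y ω - σ') 0 ≤ 1 := by
    filter_upwards [hYr] with ω h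
    exact max_le (by linarith [h.2]) one_pos.le
  have hf_int : Integrable (fun ω => max (Y ω - σ') 0) μ := by
    refine Integrable.mono' (integrable_const 1) hf_meas.aestronglyMeasurable ?_
    filter_upwards [hf_le] with ω h
    rw [Real.norm_eq_abs, abs_of_nonneg (le_max_right _ _)]
    exact h
  rw [hf_int.integral_eq_integral_meas_lt hf_nn]
  rw [setIntegral_eq_of_subset_of_ae_diff_eq_zero measurableSet_Ioi.nullMeasurableSet
    Set.Ioc_subset_Ioi_self ?_]
  · refine setIntegral_congr_fun measurableSet_Ioc fun t ht => ?_
    have hset : {a | t < max (Y a - σ') 0} = {ω | Y ω ≤ σ' + t}ᶜ := by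
      ext ω
      simp only [Set.mem_setOf_eq, Set.mem_compl_iff, not_le, lt_max_iff]
      constructor
      · rintro (h | h)
        · linarith
        · linarith [ht.1]
      · intro h; left; linarith
    have hms : MeasurableSet {ω | Y ω ≤ σ' + t} := measurableSet_le hY measurable_const
    rw [hset, measureReal_def, measure_compl hms (measure_ne_top μ _), measure_univ,
      ENNReal.toReal_sub_of_le prob_le_one ENNReal.one_ne_top, ENNReal.toReal_one]
  · refine Filter.Eventually.of_forall fun t ht => ?_
    have ht1 : (1 : ℝ) < t := by
      simp only [Set.mem_diff, Set.mem_Ioi, Set.mem_Ioc, not_and, not_le] at ht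
      exact ht.2 ht.1
    have : μ {a | t < max (Y a - σ') 0} = 0 := by
      rw [measure_eq_zero_iff_ae_notMem]
      filter_upwards [hf_le] with a ha
      simp only [Set.mem_setOf_eq, not_lt]
      linarith
    rw [measureReal_def, this, ENNReal.toReal_zero]

/-- If X, X′ are [0,1]-valued with continuous CDFs and Kolmogorov distance ≤ ε, and
σ, σ′ ∈ [0,1] are reserve prices for the same cost c > 0 (E[(X − σ)₊] = c =
E[(X′ − σ′)₊]), then the perturbed reserve price σ′ is approximately a reserve price
for X: |E[(X − σ′)₊] − c| ≤ ε. -/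
theorem stmt_16 {Ω : Type*} [MeasurableSpace Ω] (μ : Measure Ω) [IsProbabilityMeasure μ]
    (X X' : Ω → ℝ) (hX : Measurable X) (hX' : Measurable X')
    (hXr : ∀ᵐ ω ∂μ, X ω ∈ Set.Icc (0 : ℝ) 1) (hX'r : ∀ᵐ ω ∂μ, X' ω ∈ Set.Icc (0 : ℝ) 1)
    (hcdfX : Continuous fun z : ℝ => (μ {ω | X ω ≤ z}).toReal)
    (hcdfX' : Continuous fun z : ℝ => (μ {ω | X' ω ≤ z}).toReal)
    (ε : ℝ) (hK : ∀ z : ℝ, |(μ {ω | X ω ≤ z}).toReal - (μ {ω | X' ω ≤ z}).toReal| ≤ ε)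
    (σ σ' : ℝ) (hσ : σ ∈ Set.Icc (0 : ℝ) 1) (hσ' : σ' ∈ Set.Icc (0 : ℝ) 1)
    (c : ℝ) (hc : 0 < c)
    (hres : ∫ ω, max (X ω - σ) 0 ∂μ = c)
    (hres' : ∫ ω, max (X' ω - σ') 0 ∂μ = c) :
    |(∫ ω, max (X ω - σ') 0 ∂μ) - c| ≤ ε := by
  have hA := layercake_aux μ X hX hXr σ' hσ'.1
  have hB := layercake_aux μ X' hX' hX'r σ' hσ'.1
  have hintA : IntegrableOn (fun t : ℝ => 1 - (μ {ω | X ω ≤ σ' + t}).toReal)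
      (Set.Ioc 0 1) volume :=
    (continuous_const.sub (hcdfX.comp (continuous_const.add continuous_id))).integrableOn_Ioc
  have hintB : IntegrableOn (fun t : ℝ => 1 - (μ {ω | X' ω ≤ σ' + t}).toReal)
      (Set.Ioc 0 1) volume :=
    (continuous_const.sub (hcdfX'.comp (continuous_const.add continuous_id))).integrableOn_Ioc
  rw [← hres', hA, hB, ← integral_sub hintA hintB]
  have hbound : ∀ t ∈ Set.Ioc (0 : ℝ) 1,
      ‖(1 - (μ {ω | X ω ≤ σ' + t}).toReal) - (1 - (μ {ω | X' ω ≤ σ' + t}).toReal)‖ ≤ ε := by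
    intro t _
    have := hK (σ' + t)
    rw [Real.norm_eq_abs]
    calc |(1 - (μ {ω | X ω ≤ σ' + t}).toReal) - (1 - (μ {ω | X' ω ≤ σ' + t}).toReal)|
        = |(μ {ω | X ω ≤ σ' + t}).toReal - (μ {ω | X' ω ≤ σ' + t}).toReal| := by
          rw [abs_sub_comm]; ring_nf
      _ ≤ ε := this
  have hfin : volume (Set.Ioc (0 : ℝ) 1) < ⊤ := by simp
  have := norm_setIntegral_le_of_norm_le_const (μ := volume) (s := Set.Ioc (0 : ℝ) 1)
    hfin hbound
  rw [Real.norm_eq_abs] at this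
  calc |∫ t in Set.Ioc (0:ℝ) 1, ((1 - (μ {ω | X ω ≤ σ' + t}).toReal)
        - (1 - (μ {ω | X' ω ≤ σ' + t}).toReal))| ≤ ε * (volume (Set.Ioc (0:ℝ) 1)).toReal := this
    _ = ε := by simp
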